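/- Let f and g be probability measures on ℝ with finite moments of order 2+α for some α > 0, let F and G be their cumulative distribution functions, and set M_2 := max{∫_ℝ |x|^2 df(x), ∫_ℝ |x|^2 dg(x)}. Then ∫_ℝ |F(x) − G(x)| dx ≤ (2^{−1/3} + 2^{2/3}) · M_2^{1/3} · (∫_ℝ |F(x) − G(x)|^2 dx)^{1/3}. -/

import Mathlib

open MeasureTheory
open scoped ENNReal

noncomputable section

/-- `π` is a coupling of the probability measures `f` and `g` on `ℝ`. -/
def IsCouplingR (π : Measure (ℝ × ℝ)) (f g : Measure ℝ) : Prop :=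
  π.map Prod.fst = f ∧ π.map Prod.snd = g

/-- The Wasserstein distance of order `p` between probability measures on `ℝ`. -/
def WassersteinR (p : ℝ) (f g : Measure ℝ) : ℝ≥0∞ :=
  (⨅ π : {π : Measure (ℝ × ℝ) // IsCouplingR π f g},
    ∫⁻ x, ENNReal.ofReal (|x.1 - x.2| ^ p) ∂π.1) ^ (1 / p)

/-- The Fourier transform of the measure `f`. -/
def fourierT (f : Measure ℝ) (ξ : ℝ) : ℂ :=
  ∫ x, Complex.exp (-(Complex.I * (x : ℂ) * (ξ : ℂ))) ∂f

/-- The Toscani (Fourier-based) distance of order `s` between probability measures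
on `ℝ`. -/
def ToscaniR (s : ℝ) (f g : Measure ℝ) : ℝ≥0∞ :=
  ⨆ ξ : {ξ : ℝ // ξ ≠ 0}, ENNReal.ofReal (‖fourierT f ξ - fourierT g ξ‖ / |ξ.1| ^ s)

/-- The cumulative distribution function of the measure `f`. -/
def cdfR (f : Measure ℝ) (x : ℝ) : ℝ := (f (Set.Iic x)).toReal

noncomputable section

namespace Stmt8Aux

open Set

/-- The "two-sided tail" function of a measure. -/
def tailFun (μ : Measure ℝ) (x : ℝ) : ℝ :=
  if x < 0 then (μ (Iic x)).toReal else (μ (Ioi x)).toReal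

variable (μ : Measure ℝ) [IsProbabilityMeasure μ]

lemma cdfR_mono : Monotone (fun x => (μ (Iic x)).toReal) := fun _ _ hxy =>
  ENNReal.toReal_mono (measure_ne_top μ _) (measure_mono (Iic_subset_Iic.2 hxy))

lemma cdfR_meas : Measurable (fun x => (μ (Iic x)).toReal) := (cdfR_mono μ).measurable

lemma tail_meas : Measurable (fun x => (μ (Ioi x)).toReal) := by
  have : Antitone (fun x => (μ (Ioi x)).toReal) := fun x y hxy =>
    ENNReal.toReal_mono (measure_ne_top μ _) (measure_mono (Ioi_subset_Ioi hxy))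
  exact this.measurable

omit [IsProbabilityMeasure μ] in
lemma tailFun_nonneg (x : ℝ) : 0 ≤ tailFun μ x := by
  unfold tailFun; split_ifs <;> exact ENNReal.toReal_nonneg

lemma tailFun_meas : Measurable (tailFun μ) := by
  unfold tailFun
  exact Measurable.ite measurableSet_Iio (cdfR_meas μ) (tail_meas μ)

lemma cdfR_add_tail (x : ℝ) : (μ (Iic x)).toReal + (μ (Ioi x)).toReal = 1 := by
  rw [← ENNReal.toReal_add (measure_ne_top μ _) (measure_ne_top μ _),
    ← measure_union (Iic_disjoint_Ioi le_rfl) measurableSet_Ioi, Iic_union_Ioi,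
    measure_univ, ENNReal.toReal_one]

/-- Fubini computation: right tail. -/
lemma lintegral_tail_right (R : ℝ) :
    ∫⁻ x in Ioi R, μ (Ioi x) = ∫⁻ t, ENNReal.ofReal (t - R) ∂μ := by
  have hmeas : Measurable (Function.uncurry fun (x t : ℝ) =>
      (Ioi x).indicator (fun _ => (1 : ℝ≥0∞)) t) := by
    have he : (Function.uncurry fun (x t : ℝ) => (Ioi x).indicator (fun _ => (1:ℝ≥0∞)) t)
        = ({p : ℝ × ℝ | p.1 < p.2}).indicator (fun _ => 1) := by
      ext ⟨x, t⟩
      by_cases h : x < t <;> simp [Function.uncurry, Set.indicator, h]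
    rw [he]
    exact measurable_const.indicator (measurableSet_lt measurable_fst measurable_snd)
  calc ∫⁻ x in Ioi R, μ (Ioi x)
      = ∫⁻ x in Ioi R, ∫⁻ t, (Ioi x).indicator (fun _ => (1 : ℝ≥0∞)) t ∂μ := by
        refine lintegral_congr fun x => ?_
        rw [lintegral_indicator measurableSet_Ioi]; simp
    _ = ∫⁻ t, ∫⁻ x in Ioi R, (Ioi x).indicator (fun _ => (1 : ℝ≥0∞)) t ∂volume ∂μ :=
        lintegral_lintegral_swap hmeas.aemeasurable
    _ = ∫⁻ t, ENNReal.ofReal (t - R) ∂μ := by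
        refine lintegral_congr fun t => ?_
        have he : ∀ x, (Ioi x).indicator (fun _ => (1:ℝ≥0∞)) t
            = (Iio t).indicator (fun _ => (1:ℝ≥0∞)) x := by
          intro x; by_cases h : x < t <;> simp [Set.indicator, h]
        simp_rw [he]
        rw [lintegral_indicator measurableSet_Iio, Measure.restrict_restrict measurableSet_Iio,
          lintegral_one, Measure.restrict_apply_univ, Iio_inter_Ioi, Real.volume_Ioo]

/-- Fubini computation: left tail. -/
lemma lintegral_tail_left (R : ℝ) :
    ∫⁻ x in Iio R, μ (Iic x) = ∫⁻ t, ENNReal.ofReal (R - t) ∂μ := by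
  have hmeas : Measurable (Function.uncurry fun (x t : ℝ) =>
      (Iic x).indicator (fun _ => (1 : ℝ≥0∞)) t) := by
    have he : (Function.uncurry fun (x t : ℝ) => (Iic x).indicator (fun _ => (1:ℝ≥0∞)) t)
        = ({p : ℝ × ℝ | p.2 ≤ p.1}).indicator (fun _ => 1) := by
      ext ⟨x, t⟩
      by_cases h : t ≤ x <;> simp [Function.uncurry, Set.indicator, h]
    rw [he]
    exact measurable_const.indicator (measurableSet_le measurable_snd measurable_fst)
  calc ∫⁻ x in Iio R, μ (Iic x)
      = ∫⁻ x in Iio R, ∫⁻ t, (Iic x).indicator (fun _ => (1 : ℝ≥0∞)) t ∂μ := by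
        refine lintegral_congr fun x => ?_
        rw [lintegral_indicator measurableSet_Iic]; simp
    _ = ∫⁻ t, ∫⁻ x in Iio R, (Iic x).indicator (fun _ => (1 : ℝ≥0∞)) t ∂volume ∂μ :=
        lintegral_lintegral_swap hmeas.aemeasurable
    _ = ∫⁻ t, ENNReal.ofReal (R - t) ∂μ := by
        refine lintegral_congr fun t => ?_
        have he : ∀ x, (Iic x).indicator (fun _ => (1:ℝ≥0∞)) t
            = (Ici t).indicator (fun _ => (1:ℝ≥0∞)) x := by
          intro x; by_cases h : t ≤ x <;> simp [Set.indicator, h]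
        simp_rw [he]
        rw [lintegral_indicator measurableSet_Ici, Measure.restrict_restrict measurableSet_Ici,
          lintegral_one, Measure.restrict_apply_univ, Ici_inter_Iio, Real.volume_Ico]

end Stmt8Aux

end

noncomputable section More
namespace Stmt8Aux
open Set

variable (μ : Measure ℝ) [IsProbabilityMeasure μ]

lemma tailFun_integrable (hm : Integrable (fun t : ℝ => |t|) μ) :
    Integrable (tailFun μ) := by
  refine ⟨(tailFun_meas μ).aestronglyMeasurable, ?_⟩
  rw [hasFiniteIntegral_iff_ofReal (ae_of_all _ (tailFun_nonneg μ))]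
  have hfin : ∫⁻ t, ENNReal.ofReal |t| ∂μ < ⊤ := by
    rw [← ofReal_integral_eq_lintegral_ofReal hm (ae_of_all _ fun t => abs_nonneg t)]
    exact ENNReal.ofReal_lt_top
  have hsplit : ∫⁻ x, ENNReal.ofReal (tailFun μ x)
      = (∫⁻ x in Iio 0, ENNReal.ofReal (tailFun μ x))
        + ∫⁻ x in Ici 0, ENNReal.ofReal (tailFun μ x) := by
    rw [← compl_Iio, lintegral_add_compl _ measurableSet_Iio]
  have hleft : ∫⁻ x in Iio 0, ENNReal.ofReal (tailFun μ x) ≤ ∫⁻ t, ENNReal.ofReal |t| ∂μ := by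
    have h1 : ∫⁻ x in Iio 0, ENNReal.ofReal (tailFun μ x) = ∫⁻ x in Iio 0, μ (Iic x) := by
      refine setLIntegral_congr_fun measurableSet_Iio (fun x hx => ?_)
      rw [tailFun, if_pos (mem_Iio.mp hx), ENNReal.ofReal_toReal (measure_ne_top μ _)]
    rw [h1, lintegral_tail_left]
    exact lintegral_mono fun t => ENNReal.ofReal_le_ofReal (by rw [zero_sub]; exact neg_le_abs t)
  have hright : ∫⁻ x in Ici 0, ENNReal.ofReal (tailFun μ x) ≤ ∫⁻ t, ENNReal.ofReal |t| ∂μ := by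
    have h0 : ∫⁻ x in Ici 0, ENNReal.ofReal (tailFun μ x)
        = ∫⁻ x in Ioi 0, ENNReal.ofReal (tailFun μ x) := by
      rw [Measure.restrict_congr_set Ioi_ae_eq_Ici]
    have h1 : ∫⁻ x in Ioi 0, ENNReal.ofReal (tailFun μ x) = ∫⁻ x in Ioi 0, μ (Ioi x) := by
      refine setLIntegral_congr_fun measurableSet_Ioi (fun x hx => ?_)
      rw [tailFun, if_neg (not_lt.mpr (le_of_lt (mem_Ioi.mp hx))),
        ENNReal.ofReal_toReal (measure_ne_top μ _)]
    rw [h0, h1, lintegral_tail_right]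
    exact lintegral_mono fun t => ENNReal.ofReal_le_ofReal (by rw [sub_zero]; exact le_abs_self t)
  calc ∫⁻ x, ENNReal.ofReal (tailFun μ x)
      ≤ (∫⁻ t, ENNReal.ofReal |t| ∂μ) + ∫⁻ t, ENNReal.ofReal |t| ∂μ := by
        rw [hsplit]; exact add_le_add hleft hright
    _ < ⊤ := by exact ENNReal.add_lt_top.mpr ⟨hfin, hfin⟩

lemma tailFun_lintegral_tail_le (R : ℝ) (hR : 0 < R)
    (hm2 : Integrable (fun t : ℝ => |t| ^ 2) μ) :
    ∫⁻ x in Iio (-R) ∪ Ioi R, ENNReal.ofReal (tailFun μ x)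
      ≤ ENNReal.ofReal ((∫ t, |t| ^ 2 ∂μ) / (4 * R)) := by
  have hdisj : Disjoint (Iio (-R)) (Ioi R) := by
    rw [Set.disjoint_left]; intro x hx hx'
    have h1 := mem_Iio.mp hx; have h2 := mem_Ioi.mp hx'; linarith
  rw [lintegral_union measurableSet_Ioi hdisj]
  have h1 : ∫⁻ x in Iio (-R), ENNReal.ofReal (tailFun μ x) = ∫⁻ t, ENNReal.ofReal (-R - t) ∂μ := by
    rw [← lintegral_tail_left]
    refine setLIntegral_congr_fun measurableSet_Iio (fun x hx => ?_)
    have hx0 : x < 0 := lt_trans (mem_Iio.mp hx) (by linarith)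
    rw [tailFun, if_pos hx0, ENNReal.ofReal_toReal (measure_ne_top μ _)]
  have h2 : ∫⁻ x in Ioi R, ENNReal.ofReal (tailFun μ x) = ∫⁻ t, ENNReal.ofReal (t - R) ∂μ := by
    rw [← lintegral_tail_right]
    refine setLIntegral_congr_fun measurableSet_Ioi (fun x hx => ?_)
    have hx0 : ¬ x < 0 := not_lt.mpr (le_of_lt (lt_trans hR (mem_Ioi.mp hx)))
    rw [tailFun, if_neg hx0, ENNReal.ofReal_toReal (measure_ne_top μ _)]
  rw [h1, h2, ← lintegral_add_left (by fun_prop)]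
  calc ∫⁻ t, (ENNReal.ofReal (-R - t) + ENNReal.ofReal (t - R)) ∂μ
      ≤ ∫⁻ t, ENNReal.ofReal (|t| ^ 2 / (4 * R)) ∂μ := by
        refine lintegral_mono fun t => ?_
        rcases le_or_gt t 0 with h | h
        · have hz : ENNReal.ofReal (t - R) = 0 := ENNReal.ofReal_eq_zero.mpr (by linarith)
          rw [hz, add_zero]
          refine ENNReal.ofReal_le_ofReal ?_
          rw [le_div_iff₀ (by positivity), sq_abs]
          nlinarith [sq_nonneg (t + 2 * R)]
        · have hz : ENNReal.ofReal (-R - t) = 0 := ENNReal.ofReal_eq_zero.mpr (by linarith)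
          rw [hz, zero_add]
          refine ENNReal.ofReal_le_ofReal ?_
          rw [le_div_iff₀ (by positivity), sq_abs]
          nlinarith [sq_nonneg (t - 2 * R)]
    _ = ENNReal.ofReal ((∫ t, |t| ^ 2 ∂μ) / (4 * R)) := by
        rw [← ofReal_integral_eq_lintegral_ofReal (hm2.div_const _)
          (ae_of_all _ fun t => by positivity), integral_div]

end Stmt8Aux
end More

set_option maxHeartbeats 1000000 in
/-- For probability measures `f, g` on `ℝ` with finite moments of order
`2 + α` for some `α > 0`, with cumulative distribution functions `F, G` and
`M₂ := max{∫ |x|² df, ∫ |x|² dg}`, one has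
`∫ |F − G| ≤ (2^{-1/3} + 2^{2/3}) · M₂^{1/3} · (∫ |F − G|²)^{1/3}`. -/
theorem L1_cdf_le_L2_cdf (α : ℝ) (hα : 0 < α) (f g : Measure ℝ)
    [IsProbabilityMeasure f] [IsProbabilityMeasure g]
    (hf : Integrable (fun x : ℝ => |x| ^ (2 + α)) f)
    (hg : Integrable (fun x : ℝ => |x| ^ (2 + α)) g) :
    ∫ x, |cdfR f x - cdfR g x| ≤
      ((2 : ℝ) ^ (-(1 : ℝ) / 3) + (2 : ℝ) ^ ((2 : ℝ) / 3)) *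
          (max (∫ x, |x| ^ 2 ∂f) (∫ x, |x| ^ 2 ∂g)) ^ ((1 : ℝ) / 3) *
        (∫ x, |cdfR f x - cdfR g x| ^ 2) ^ ((1 : ℝ) / 3) := by
  classical
  -- basic integrability consequences of the moment hypothesis
  have hax : ∀ (μ : Measure ℝ) [IsProbabilityMeasure μ],
      Integrable (fun x : ℝ => |x| ^ (2 + α)) μ →
      Integrable (fun x : ℝ => |x|) μ ∧ Integrable (fun x : ℝ => |x| ^ 2) μ := by
    intro μ _ hint
    have h1 : Integrable (fun x : ℝ => 1 + |x| ^ (2 + α)) μ := (integrable_const 1).add hint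
    constructor
    · refine h1.mono' (measurable_abs.aestronglyMeasurable) (ae_of_all _ fun x => ?_)
      rw [Real.norm_eq_abs, abs_abs]
      rcases le_or_gt |x| 1 with h | h
      · have : (0:ℝ) ≤ |x| ^ (2 + α) := Real.rpow_nonneg (abs_nonneg x) _
        linarith
      · have h2 : |x| = |x| ^ (1:ℝ) := (Real.rpow_one _).symm
        have h3 : |x| ^ (1:ℝ) ≤ |x| ^ (2 + α) :=
          Real.rpow_le_rpow_of_exponent_le h.le (by linarith)
        rw [Real.rpow_one] at h3
        linarith
    · refine h1.mono' ((measurable_abs.pow_const 2).aestronglyMeasurable)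
        (ae_of_all _ fun x => ?_)
      rw [Real.norm_eq_abs, abs_pow, abs_abs]
      rcases le_or_gt |x| 1 with h | h
      · have h2 : |x| ^ 2 ≤ 1 := pow_le_one₀ (abs_nonneg x) h
        have : (0:ℝ) ≤ |x| ^ (2 + α) := Real.rpow_nonneg (abs_nonneg x) _
        linarith
      · have h2 : |x| ^ 2 = |x| ^ ((2:ℕ):ℝ) := (Real.rpow_natCast _ 2).symm
        have h3 : |x| ^ ((2:ℕ):ℝ) ≤ |x| ^ (2 + α) :=
          Real.rpow_le_rpow_of_exponent_le h.le (by push_cast; linarith)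
        rw [Real.rpow_natCast] at h3
        linarith
  obtain ⟨habsf, hm2f⟩ := hax f hf
  obtain ⟨habsg, hm2g⟩ := hax g hg
  set M := max (∫ x, |x| ^ 2 ∂f) (∫ x, |x| ^ 2 ∂g) with hMdef
  have hm2f_nn : 0 ≤ ∫ x, |x| ^ 2 ∂f := integral_nonneg fun x => by positivity
  have hm2g_nn : 0 ≤ ∫ x, |x| ^ 2 ∂g := integral_nonneg fun x => by positivity
  have hMnn : 0 ≤ M := le_trans hm2f_nn (le_max_left _ _)
  set D : ℝ → ℝ := fun x => cdfR f x - cdfR g x with hDdef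
  have hL1 : (fun x => |cdfR f x - cdfR g x|) = fun x => |D x| := by simp only [hDdef]
  have hL2 : (fun x => |cdfR f x - cdfR g x| ^ 2) = fun x => D x ^ 2 := by
    simp only [hDdef]; funext x; rw [sq_abs]
  simp only [hL1, hL2]
  set S := ∫ x, D x ^ 2 with hSdef
  set C := (2:ℝ) ^ (-(1:ℝ) / 3) + (2:ℝ) ^ ((2:ℝ) / 3) with hCdef
  -- properties of D
  have hDmeas : Measurable D := (Stmt8Aux.cdfR_meas f).sub (Stmt8Aux.cdfR_meas g)
  have hDle : ∀ x, |D x| ≤ Stmt8Aux.tailFun f x + Stmt8Aux.tailFun g x := by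
    intro x
    unfold Stmt8Aux.tailFun
    by_cases h : x < 0
    · rw [if_pos h, if_pos h]
      refine (abs_sub _ _).trans ?_
      simp only [hDdef, cdfR]
      rw [abs_of_nonneg ENNReal.toReal_nonneg, abs_of_nonneg ENNReal.toReal_nonneg]
    · rw [if_neg h, if_neg h]
      have h1 := Stmt8Aux.cdfR_add_tail f x
      have h2 := Stmt8Aux.cdfR_add_tail g x
      have he : D x = (g (Set.Ioi x)).toReal - (f (Set.Ioi x)).toReal := by
        simp only [hDdef, cdfR]; linarith
      rw [he]
      refine (abs_sub _ _).trans ?_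
      rw [abs_of_nonneg ENNReal.toReal_nonneg, abs_of_nonneg ENNReal.toReal_nonneg]
      linarith
  have hDle1 : ∀ x, |D x| ≤ 1 := by
    intro x
    have h3 : cdfR f x ≤ 1 := by
      have := Stmt8Aux.cdfR_add_tail f x
      have := (ENNReal.toReal_nonneg : (0:ℝ) ≤ (f (Set.Ioi x)).toReal)
      simp only [cdfR]; linarith
    have h4 : cdfR g x ≤ 1 := by
      have := Stmt8Aux.cdfR_add_tail g x
      have := (ENNReal.toReal_nonneg : (0:ℝ) ≤ (g (Set.Ioi x)).toReal)
      simp only [cdfR]; linarith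
    have h1 : (0:ℝ) ≤ cdfR f x := ENNReal.toReal_nonneg
    have h2 : (0:ℝ) ≤ cdfR g x := ENNReal.toReal_nonneg
    rw [abs_le]; constructor <;> simp only [hDdef] <;> linarith
  have hBint : Integrable (fun x => Stmt8Aux.tailFun f x + Stmt8Aux.tailFun g x) :=
    (Stmt8Aux.tailFun_integrable f habsf).add (Stmt8Aux.tailFun_integrable g habsg)
  have hDint : Integrable (fun x => |D x|) :=
    hBint.mono' hDmeas.abs.aestronglyMeasurable
      (ae_of_all _ fun x => by rw [Real.norm_eq_abs, abs_abs]; exact hDle x)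
  have hD2int : Integrable (fun x => D x ^ 2) := by
    refine hBint.mono' ((hDmeas.pow_const 2).aestronglyMeasurable) (ae_of_all _ fun x => ?_)
    rw [Real.norm_eq_abs, abs_pow]
    calc |D x| ^ 2 ≤ |D x| * 1 := by
          rw [sq]; exact mul_le_mul_of_nonneg_left (hDle1 x) (abs_nonneg _)
      _ = |D x| := mul_one _
      _ ≤ _ := hDle x
  have hSnn : 0 ≤ S := integral_nonneg fun x => sq_nonneg _
  -- degenerate case  M = 0
  rcases hMnn.eq_or_lt with hM0 | hMpos
  · have hzf : ∀ x, Stmt8Aux.tailFun f x = 0 ∧ Stmt8Aux.tailFun g x = 0 := by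
      have hz : ∀ (μ : Measure ℝ) [IsProbabilityMeasure μ],
          Integrable (fun x : ℝ => |x| ^ 2) μ →
          (∫ x, |x| ^ 2 ∂μ) = 0 → ∀ x, Stmt8Aux.tailFun μ x = 0 := by
        intro μ _ hint h0
        have hae : (fun x : ℝ => |x| ^ 2) =ᵐ[μ] 0 :=
          (integral_eq_zero_iff_of_nonneg (fun x => by positivity) hint).mp h0
        have hnull : μ ({(0:ℝ)}ᶜ) = 0 := by
          have h' := hae
          rw [Filter.EventuallyEq, ae_iff] at h'
          convert h' using 2
          ext a
          simp only [Set.mem_compl_iff, Set.mem_singleton_iff, Set.mem_setOf_eq, Pi.zero_apply]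
          constructor
          · intro h hc
            exact h (by simpa [abs_eq_zero] using (pow_eq_zero_iff (n := 2) (by norm_num)).mp hc)
          · intro h hc; rw [hc] at h; simp at h
        intro x
        unfold Stmt8Aux.tailFun
        split_ifs with h
        · have hIic : μ (Set.Iic x) = 0 :=
            measure_mono_null (fun t ht => by
              simp only [Set.mem_compl_iff, Set.mem_singleton_iff]
              intro h0'; rw [h0'] at ht
              exact absurd (Set.mem_Iic.mp ht) (not_le.mpr h)) hnull
          rw [hIic]; rfl
        · have hIoi : μ (Set.Ioi x) = 0 :=
            measure_mono_null (fun t ht => by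
              simp only [Set.mem_compl_iff, Set.mem_singleton_iff]
              intro h0'; rw [h0'] at ht
              exact absurd (Set.mem_Ioi.mp ht) (not_lt.mpr (not_lt.mp h))) hnull
          rw [hIoi]; rfl
      have hf0 : (∫ x, |x| ^ 2 ∂f) = 0 :=
        le_antisymm (hM0 ▸ le_max_left _ _) hm2f_nn
      have hg0 : (∫ x, |x| ^ 2 ∂g) = 0 :=
        le_antisymm (hM0 ▸ le_max_right _ _) hm2g_nn
      exact fun x => ⟨hz f hm2f hf0 x, hz g hm2g hg0 x⟩
    have hD0 : ∀ x, |D x| = 0 := by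
      intro x
      have h := hDle x
      have h1 := (hzf x).1; have h2 := (hzf x).2
      have := abs_nonneg (D x)
      linarith
    have hL0 : ∫ x, |D x| = 0 := by simp only [hD0, integral_zero]
    rw [hL0, ← hM0, Real.zero_rpow (by norm_num : (1:ℝ)/3 ≠ 0)]
    have hz' : C * 0 * S ^ ((1:ℝ)/3) = 0 := by ring
    rw [hz']
  -- degenerate case  S = 0
  rcases hSnn.eq_or_lt with hS0 | hSpos
  · have hae : (fun x => D x ^ 2) =ᵐ[volume] 0 :=
      (integral_eq_zero_iff_of_nonneg (fun x => sq_nonneg _) hD2int).mp hS0.symm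
    have hae2 : (fun x => |D x|) =ᵐ[volume] 0 := by
      filter_upwards [hae] with x hx
      simp only [Pi.zero_apply] at hx ⊢
      exact abs_eq_zero.mpr ((pow_eq_zero_iff (n := 2) (by norm_num)).mp hx)
    have hL0 : ∫ x, |D x| = 0 := by
      rw [integral_congr_ae hae2]; simp
    rw [hL0, ← hS0, Real.zero_rpow (by norm_num : (1:ℝ)/3 ≠ 0), mul_zero]
  -- main case
  set c := (2:ℝ) ^ ((1:ℝ)/2) with hcdef
  have hc0 : 0 < c := Real.rpow_pos_of_pos (by norm_num) _
  have hc2 : c ^ 2 = 2 := by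
    rw [hcdef, ← Real.rpow_natCast ((2:ℝ) ^ ((1:ℝ)/2)) 2, ← Real.rpow_mul (by norm_num)]
    norm_num
  set m := M ^ ((1:ℝ)/3) with hmdef
  set s := S ^ ((1:ℝ)/3) with hsdef
  have hm0 : 0 < m := Real.rpow_pos_of_pos hMpos _
  have hs0 : 0 < s := Real.rpow_pos_of_pos hSpos _
  have hm3 : m ^ 3 = M := by
    rw [hmdef, ← Real.rpow_natCast (M ^ ((1:ℝ)/3)) 3, ← Real.rpow_mul hMpos.le]
    norm_num
  have hs3 : s ^ 3 = S := by
    rw [hsdef, ← Real.rpow_natCast (S ^ ((1:ℝ)/3)) 3, ← Real.rpow_mul hSpos.le]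
    norm_num
  clear_value c m s
  have hcne : c ≠ 0 := ne_of_gt hc0
  have hmne : m ≠ 0 := ne_of_gt hm0
  have hsne : s ≠ 0 := ne_of_gt hs0
  set R := m ^ 2 / s with hRdef
  set a := c * m / s ^ 2 with hadef
  have hR0 : 0 < R := by positivity
  have ha0 : 0 < a := by positivity
  clear_value R a
  -- split the integral into inner part and tails
  have hcompl : (Set.Icc (-R) R)ᶜ = Set.Iio (-R) ∪ Set.Ioi R := by
    ext x
    simp only [Set.mem_compl_iff, Set.mem_Icc, not_and_or, not_le, Set.mem_union,
      Set.mem_Iio, Set.mem_Ioi]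
  have hsplit : ∫ x, |D x| = (∫ x in Set.Icc (-R) R, |D x|)
      + ∫ x in Set.Iio (-R) ∪ Set.Ioi R, |D x| := by
    rw [← hcompl, integral_add_compl measurableSet_Icc hDint]
  -- inner estimate
  have hinner : ∫ x in Set.Icc (-R) R, |D x| ≤ a / 2 * S + R / a := by
    have hconst : IntegrableOn (fun _ : ℝ => 1 / (2 * a)) (Set.Icc (-R) R) volume :=
      (integrableOn_const_iff (C := (1 / (2 * a) : ℝ))).mpr (Or.inr (by rw [Real.volume_Icc]; exact ENNReal.ofReal_lt_top))
    have hvol : (volume (Set.Icc (-R) R)).toReal = 2 * R := by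
      rw [Real.volume_Icc, ENNReal.toReal_ofReal (by linarith)]; ring
    have step1 : ∫ x in Set.Icc (-R) R, |D x|
        ≤ ∫ x in Set.Icc (-R) R, (a / 2 * D x ^ 2 + 1 / (2 * a)) := by
      refine integral_mono hDint.integrableOn
        (((hD2int.const_mul (a/2)).integrableOn).add hconst) (fun x => ?_)
      have h1 : 2 * a * |D x| ≤ a ^ 2 * D x ^ 2 + 1 := by
        nlinarith [sq_nonneg (a * |D x| - 1), sq_abs (D x)]
      rw [← sub_nonneg]
      have h2 : a / 2 * D x ^ 2 + 1 / (2 * a) - |D x|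
          = (a ^ 2 * D x ^ 2 + 1 - 2 * a * |D x|) / (2 * a) := by
        field_simp
      rw [h2]
      have h3 : 0 ≤ a ^ 2 * D x ^ 2 + 1 - 2 * a * |D x| := by linarith
      exact div_nonneg h3 (by linarith)
    have step2 : ∫ x in Set.Icc (-R) R, (a / 2 * D x ^ 2 + 1 / (2 * a))
        = a / 2 * (∫ x in Set.Icc (-R) R, D x ^ 2) + R / a := by
      rw [integral_add ((hD2int.const_mul (a/2)).integrableOn) hconst,
        setIntegral_const, integral_const_mul, smul_eq_mul, measureReal_def, hvol]
      field_simp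
    have step3 : ∫ x in Set.Icc (-R) R, D x ^ 2 ≤ S :=
      setIntegral_le_integral hD2int (ae_of_all _ fun x => sq_nonneg _)
    calc ∫ x in Set.Icc (-R) R, |D x| ≤ _ := step1
      _ = a / 2 * (∫ x in Set.Icc (-R) R, D x ^ 2) + R / a := step2
      _ ≤ a / 2 * S + R / a := by
          have := mul_le_mul_of_nonneg_left step3 (le_of_lt (by linarith : (0:ℝ) < a / 2))
          linarith
  -- tail estimate
  have htail : ∫ x in Set.Iio (-R) ∪ Set.Ioi R, |D x| ≤ M / (2 * R) := by
    have hmono : ∫ x in Set.Iio (-R) ∪ Set.Ioi R, |D x|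
        ≤ ∫ x in Set.Iio (-R) ∪ Set.Ioi R, (Stmt8Aux.tailFun f x + Stmt8Aux.tailFun g x) :=
      integral_mono hDint.integrableOn hBint.integrableOn hDle
    have htf : ∀ (μ : Measure ℝ) [IsProbabilityMeasure μ],
        Integrable (fun x : ℝ => |x| ^ 2) μ →
        ∫ x in Set.Iio (-R) ∪ Set.Ioi R, Stmt8Aux.tailFun μ x ≤ (∫ t, |t| ^ 2 ∂μ) / (4 * R) := by
      intro μ _ hm2
      rw [integral_eq_lintegral_of_nonneg_ae (ae_of_all _ fun x => Stmt8Aux.tailFun_nonneg μ x)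
        ((Stmt8Aux.tailFun_meas μ).aestronglyMeasurable)]
      refine ENNReal.toReal_le_of_le_ofReal ?_ (Stmt8Aux.tailFun_lintegral_tail_le μ R hR0 hm2)
      have h0 : 0 ≤ ∫ t, |t| ^ 2 ∂μ := integral_nonneg fun t => by positivity
      exact div_nonneg h0 (by linarith)
    have hadd : ∫ x in Set.Iio (-R) ∪ Set.Ioi R, (Stmt8Aux.tailFun f x + Stmt8Aux.tailFun g x)
        = (∫ x in Set.Iio (-R) ∪ Set.Ioi R, Stmt8Aux.tailFun f x)
          + ∫ x in Set.Iio (-R) ∪ Set.Ioi R, Stmt8Aux.tailFun g x :=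
      integral_add ((Stmt8Aux.tailFun_integrable f habsf).integrableOn)
        ((Stmt8Aux.tailFun_integrable g habsg).integrableOn)
    have h1 := htf f hm2f
    have h2 := htf g hm2g
    have hMf : (∫ t, |t| ^ 2 ∂f) / (4 * R) ≤ M / (4 * R) := by
      have : (∫ t, |t| ^ 2 ∂f) ≤ M := le_max_left _ _
      gcongr
    have hMg : (∫ t, |t| ^ 2 ∂g) / (4 * R) ≤ M / (4 * R) := by
      have : (∫ t, |t| ^ 2 ∂g) ≤ M := le_max_right _ _
      gcongr
    have hhalf : M / (4 * R) + M / (4 * R) = M / (2 * R) := by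
      field_simp; ring
    calc ∫ x in Set.Iio (-R) ∪ Set.Ioi R, |D x| ≤ _ := hmono
      _ = _ := hadd
      _ ≤ M / (4 * R) + M / (4 * R) := add_le_add (h1.trans hMf) (h2.trans hMg)
      _ = M / (2 * R) := hhalf
  -- the algebra
  have ht1 : a / 2 * S = c / 2 * (m * s) := by
    rw [hadef, ← hs3]; field_simp
  have ht2 : R / a = 1 / c * (m * s) := by
    rw [hadef, hRdef]; field_simp
  have ht3 : M / (2 * R) = 1 / 2 * (m * s) := by
    rw [hRdef, ← hm3]; field_simp
  have hcinv : 1 / c = c / 2 := by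
    rw [div_eq_div_iff hcne (by norm_num : (2:ℝ) ≠ 0), one_mul, ← sq, hc2]
  have hkey : a / 2 * S + R / a + M / (2 * R) = (c + 1 / 2) * (m * s) := by
    rw [ht1, ht2, ht3, hcinv]; ring
  -- numeric comparison of constants
  have hC1 : c ≤ (2:ℝ) ^ ((2:ℝ)/3) := by
    rw [hcdef]
    exact Real.rpow_le_rpow_of_exponent_le one_le_two (by norm_num)
  have hC2 : (1:ℝ)/2 ≤ (2:ℝ) ^ (-(1:ℝ)/3) := by
    have h := Real.rpow_le_rpow_of_exponent_le (one_le_two : (1:ℝ) ≤ 2)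
      (by norm_num : (-1:ℝ) ≤ -(1:ℝ)/3)
    rw [Real.rpow_neg_one] at h
    linarith [h]
  have hfin : (c + 1/2) * (m * s) ≤ C * (m * s) := by
    refine mul_le_mul_of_nonneg_right ?_ (by positivity)
    rw [hCdef]; linarith
  calc ∫ x, |D x| = _ := hsplit
    _ ≤ (a / 2 * S + R / a) + M / (2 * R) := add_le_add hinner htail
    _ = (c + 1/2) * (m * s) := by rw [← hkey]
    _ ≤ C * (m * s) := hfin
    _ = C * m * s := by ring


end
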